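/- A matching M in a graph G is uniquely restricted (i.e., it is the unique perfect matching of the subgraph induced by the vertices it saturates) if and only if G contains no M-alternating cycle, i.e., no cycle whose edges alternate between M and E(G)\M. -/

import Mathlib

open SimpleGraph

variable {V : Type*}

/-- `M` is a matching in `G`: a set of edges of `G`, pairwise not sharing a vertex. -/
def IsMatchingIn (G : SimpleGraph V) (M : Set (Sym2 V)) : Prop :=
  M ⊆ G.edgeSet ∧ ∀ e ∈ M, ∀ f ∈ M, e ≠ f → ∀ v : V, ¬(v ∈ e ∧ v ∈ f)

/-- The set of vertices saturated by the edge set `M`. -/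
def sat (M : Set (Sym2 V)) : Set V := {v | ∃ e ∈ M, v ∈ e}

/-- A list of edges alternates w.r.t. `M` if consecutive edges alternate membership in `M`. -/
def Alternates (M : Set (Sym2 V)) (l : List (Sym2 V)) : Prop :=
  l.Chain' (fun e f => (e ∈ M ↔ f ∉ M))

/-- An `M`-alternating cycle: an even cycle whose edges alternate between `M` and `E \ M`. -/
def IsAltCycle (G : SimpleGraph V) (M : Set (Sym2 V)) {v : V} (c : G.Walk v v) : Prop :=
  c.IsCycle ∧ c.edges.length % 2 = 0 ∧ Alternates M c.edges

/-- `M` is uniquely restricted: it is the unique perfect matching of the subgraph of `G`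
induced by the `M`-saturated vertices. -/
def UniquelyRestricted (G : SimpleGraph V) (M : Set (Sym2 V)) : Prop :=
  IsMatchingIn G M ∧ ∀ N : Set (Sym2 V), IsMatchingIn G N →
    (∀ e ∈ N, ∀ v ∈ e, v ∈ sat M) → sat N = sat M → N = M

/-- Arc relation of the digraph `D(G,M)` for a bipartite graph with class `X`:
an arc `x₁ → x₂` between distinct `M`-saturated `X`-vertices whenever
`(x₁, x₂') ∈ E \ M`, where `x₂'` is the `M`-partner of `x₂`. -/
def DArc (G : SimpleGraph V) (M : Set (Sym2 V)) (X : Set V) (x₁ x₂ : V) : Prop :=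
  x₁ ∈ X ∧ x₂ ∈ X ∧ x₁ ≠ x₂ ∧ (∃ y, s(x₁, y) ∈ M) ∧
    ∃ y, s(x₂, y) ∈ M ∧ s(x₁, y) ∈ G.edgeSet ∧ s(x₁, y) ∉ M

lemma sat_iff {M : Set (Sym2 V)} {v : V} : v ∈ sat M ↔ ∃ w, s(v, w) ∈ M := by
  constructor
  · rintro ⟨e, heM, hve⟩
    induction e using Sym2.ind with
    | _ a b =>
      rcases Sym2.mem_iff.1 hve with rfl | rfl
      · exact ⟨b, heM⟩
      · exact ⟨a, by rwa [Sym2.eq_swap]⟩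
  · rintro ⟨w, hw⟩
    exact ⟨s(v, w), hw, Sym2.mem_mk_left _ _⟩

lemma matching_unique {G : SimpleGraph V} {M : Set (Sym2 V)} (hM : IsMatchingIn G M)
    {v a b : V} (h1 : s(v, a) ∈ M) (h2 : s(v, b) ∈ M) : a = b := by
  by_contra hab
  refine hM.2 _ h1 _ h2 ?_ v ⟨Sym2.mem_mk_left _ _, Sym2.mem_mk_left _ _⟩
  intro h
  rcases Sym2.eq_iff.1 h with ⟨-, h⟩ | ⟨h1, h2⟩
  · exact hab h
  · exact hab (h2.trans h1)

open Classical in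
noncomputable def pr (M : Set (Sym2 V)) (v : V) : V :=
  if h : ∃ w, s(v, w) ∈ M then h.choose else v

lemma pr_spec {M : Set (Sym2 V)} {v : V} (h : v ∈ sat M) : s(v, pr M v) ∈ M := by
  rw [sat_iff] at h
  rw [pr, dif_pos h]
  exact h.choose_spec

lemma pr_eq {G : SimpleGraph V} {M : Set (Sym2 V)} (hM : IsMatchingIn G M)
    {v w : V} (h : s(v, w) ∈ M) : pr M v = w :=
  matching_unique hM (pr_spec (sat_iff.2 ⟨w, h⟩)) h

lemma pr_not_sat {M : Set (Sym2 V)} {v : V} (h : v ∉ sat M) : pr M v = v := by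
  rw [pr, dif_neg]
  intro hw
  exact h (sat_iff.2 hw)

lemma pr_mem_sat {M : Set (Sym2 V)} {v : V} (h : v ∈ sat M) : pr M v ∈ sat M :=
  ⟨_, pr_spec h, Sym2.mem_mk_right _ _⟩

lemma pr_invol {G : SimpleGraph V} {M : Set (Sym2 V)} (hM : IsMatchingIn G M)
    (v : V) : pr M (pr M v) = v := by
  by_cases h : v ∈ sat M
  · exact pr_eq hM (by rw [Sym2.eq_swap]; exact pr_spec h)
  · rw [pr_not_sat h, pr_not_sat h]

lemma pr_ne {G : SimpleGraph V} {M : Set (Sym2 V)} (hM : IsMatchingIn G M)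
    {v : V} (h : v ∈ sat M) : pr M v ≠ v := by
  have := hM.1 (pr_spec h)
  rw [SimpleGraph.mem_edgeSet] at this
  exact this.ne'

lemma pr_adj {G : SimpleGraph V} {M : Set (Sym2 V)} (hM : IsMatchingIn G M)
    {v : V} (h : v ∈ sat M) : G.Adj v (pr M v) := by
  have := hM.1 (pr_spec h)
  rwa [SimpleGraph.mem_edgeSet] at this

def walkOfSeq (G : SimpleGraph V) (w : ℕ → V) (h : ∀ i, G.Adj (w i) (w (i + 1))) :
    (n : ℕ) → G.Walk (w 0) (w n)
  | 0 => .nil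
  | n + 1 => (walkOfSeq G w h n).concat (h n)

lemma walkOfSeq_edges (G : SimpleGraph V) (w : ℕ → V) (h : ∀ i, G.Adj (w i) (w (i + 1)))
    (n : ℕ) : (walkOfSeq G w h n).edges = (List.range n).map (fun i => s(w i, w (i + 1))) := by
  induction n with
  | zero => rfl
  | succ n ih =>
    rw [walkOfSeq, Walk.edges_concat, ih, List.range_succ, List.map_append, List.concat_eq_append]
    rfl

lemma walkOfSeq_support (G : SimpleGraph V) (w : ℕ → V) (h : ∀ i, G.Adj (w i) (w (i + 1)))
    (n : ℕ) : (walkOfSeq G w h n).support = (List.range (n + 1)).map w := by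
  induction n with
  | zero => rfl
  | succ n ih =>
    rw [walkOfSeq, Walk.support_concat, ih, List.range_succ (n := n + 1), List.map_append]
    rfl

lemma walkOfSeq_length (G : SimpleGraph V) (w : ℕ → V) (h : ∀ i, G.Adj (w i) (w (i + 1)))
    (n : ℕ) : (walkOfSeq G w h n).length = n := by
  induction n with
  | zero => rfl
  | succ n ih => rw [walkOfSeq, Walk.length_concat, ih]

lemma exists_alt_cycle [Fintype V] {G : SimpleGraph V} {M N : Set (Sym2 V)}
    (hM : IsMatchingIn G M) (hN : IsMatchingIn G N) (hsat : sat N = sat M) (hne : N ≠ M) :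
    ∃ (v : V) (c : G.Walk v v), IsAltCycle G M c := by
  classical
  set σ : V → V := fun v => pr M (pr N v) with hσ
  have hsatN : ∀ v : V, v ∈ sat M → v ∈ sat N := fun v hv => by rw [hsat]; exact hv
  -- Step 1 : find x with different partners
  have step1 : ∃ x, x ∈ sat M ∧ pr N x ≠ pr M x := by
    by_contra h
    push_neg at h
    apply hne
    ext e
    constructor
    · intro he
      induction e using Sym2.ind with
      | _ a b =>
        have haN : a ∈ sat N := ⟨_, he, Sym2.mem_mk_left _ _⟩
        have haM : a ∈ sat M := by rwa [hsat] at haN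
        have h1 : pr N a = b := pr_eq hN he
        have hb : pr M a = b := (h a haM).symm.trans h1
        have := pr_spec haM
        rwa [hb] at this
    · intro he
      induction e using Sym2.ind with
      | _ a b =>
        have haM : a ∈ sat M := ⟨_, he, Sym2.mem_mk_left _ _⟩
        have h1 : pr M a = b := pr_eq hM he
        have hb : pr N a = b := (h a haM).trans h1
        have := pr_spec (hsatN a haM)
        rwa [hb] at this
  obtain ⟨x, hxM, hxne⟩ := step1
  -- closure of sat M under σ and iterates
  have hσS : ∀ v, v ∈ sat M → σ v ∈ sat M := by
    intro v hv
    exact pr_mem_sat (by rw [← hsat]; exact pr_mem_sat (hsatN v hv))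
  have hit : ∀ m, σ^[m] x ∈ sat M := by
    intro m
    induction m with
    | zero => exact hxM
    | succ m ih => rw [Function.iterate_succ_apply']; exact hσS _ ih
  have hitN : ∀ m, σ^[m] x ∈ sat N := fun m => hsatN _ (hit m)
  have hpNS : ∀ m, pr N (σ^[m] x) ∈ sat M := by
    intro m; rw [← hsat]; exact pr_mem_sat (hitN m)
  -- injectivity of σ
  have hNinv : Function.Involutive (pr N) := fun v => pr_invol hN v
  have hMinv : Function.Involutive (pr M) := fun v => pr_invol hM v
  have hσinj : Function.Injective σ := hMinv.injective.comp hNinv.injective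
  -- periodicity
  have hper0 : ∃ m, 0 < m ∧ Function.IsPeriodicPt σ m x := by
    obtain ⟨i, j, hij, h⟩ := Finite.exists_ne_map_eq_of_infinite (fun i : ℕ => σ^[i] x)
    rcases hij.lt_or_gt with hlt | hlt
    · refine ⟨j - i, by omega, ?_⟩
      have h2 := Function.iterate_add_apply σ i (j - i) x
      rw [show i + (j - i) = j by omega, ← h] at h2
      exact (hσinj.iterate i h2).symm
    · refine ⟨i - j, by omega, ?_⟩
      have h2 := Function.iterate_add_apply σ j (i - j) x
      rw [show j + (i - j) = i by omega, h] at h2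
      exact (hσinj.iterate j h2).symm
  obtain ⟨m₀, hm₀, hm₀per⟩ := hper0
  set k := Function.minimalPeriod σ x with hkdef
  have hkpos : 0 < k := hm₀per.minimalPeriod_pos hm₀
  have hk : σ^[k] x = x := Function.isPeriodicPt_minimalPeriod σ x
  have hperiodic : ∀ q m : ℕ, σ^[m + q * k] x = σ^[m] x := by
    intro q
    induction q with
    | zero => simp
    | succ q ih =>
      intro m
      have h1 : m + (q + 1) * k = (m + q * k) + k := by ring
      rw [h1, Function.iterate_add_apply, hk, ih]
  have inj1 : ∀ a b, a < k → b < k → σ^[a] x = σ^[b] x → a = b := by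
    intro a b ha hb h
    exact Function.iterate_injOn_Iio_minimalPeriod ha hb h
  have cancel : ∀ t u v : ℕ, σ^[t + u] x = σ^[t + v] x → σ^[u] x = σ^[v] x := by
    intro t u v h
    rw [Function.iterate_add_apply, Function.iterate_add_apply] at h
    exact hσinj.iterate t h
  -- partner equality from fixed point
  have hfix : ∀ v, v ∈ sat M → σ v = v → pr N v = pr M v := by
    intro v hv h
    have h2 := congrArg (pr M) h
    rw [hσ] at h2
    simp only at h2
    rwa [hMinv (pr N v)] at h2
  have hk2 : 2 ≤ k := by
    by_contra h
    have hk1 : k = 1 := by omega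
    rw [hk1] at hk
    simp only [Function.iterate_one] at hk
    exact hxne (hfix x hxM hk)
  clear_value k
  clear hkdef hm₀per
  obtain ⟨k', rfl⟩ : ∃ k', k = k' + 1 := ⟨k - 1, by omega⟩
  -- F4 : the N-edges are not in M
  have F4 : ∀ j : ℕ, s(σ^[j] x, pr N (σ^[j] x)) ∉ M := by
    intro j hmem
    have h1 : pr M (σ^[j] x) = pr N (σ^[j] x) := pr_eq hM hmem
    have h2 : σ (σ^[j] x) = σ^[j] x := by
      rw [hσ]
      show pr M (pr N (σ^[j] x)) = σ^[j] x
      rw [← h1, hMinv]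
    have hj : σ^[j % (k' + 1)] x = σ^[j] x := by
      have h3 := hperiodic (j / (k' + 1)) (j % (k' + 1))
      rw [Nat.mod_add_div' j (k' + 1)] at h3
      exact h3.symm
    have h2' : σ^[j % (k' + 1) + 1] x = σ^[j % (k' + 1)] x := by
      rw [Function.iterate_succ_apply', hj]
      exact h2
    have hjk : j % (k' + 1) < k' + 1 := Nat.mod_lt _ hkpos
    rcases Nat.lt_or_ge (j % (k' + 1) + 1) (k' + 1) with hlt | hge
    · have := inj1 _ _ hlt hjk h2'
      omega
    · have heq : j % (k' + 1) + 1 = k' + 1 := by omega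
      have h4 : σ^[0] x = σ^[k'] x := by
        have h5 := h2'
        rw [heq, hk] at h5
        rw [show j % (k' + 1) = k' by omega] at h5
        simpa using h5
      have := inj1 _ _ (by omega) (by omega) h4
      omega
  -- helper contradictions
  have master1 : ∀ e1 e2 : ℕ, pr N (σ^[e1] x) = σ^[e2] x → σ^[e1] x ≠ σ^[e2] x := by
    intro e1 e2 h heq
    rw [← heq] at h
    exact pr_ne hN (hitN e1) h
  have master2 : ∀ e1 e2 : ℕ, pr N (σ^[e1] x) = σ^[e2] x → σ^[e1] x ≠ σ^[e2 + 1] x := by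
    intro e1 e2 h heq
    have h1 : σ^[e1] x = pr N (σ^[e2] x) := by
      have := congrArg (pr N) h
      rwa [hNinv] at this
    have h2 : σ^[e2 + 1] x = pr M (pr N (σ^[e2] x)) := by
      rw [Function.iterate_succ_apply', hσ]
    rw [heq, h2] at h1
    exact pr_ne hM (hpNS e2) h1
  -- F5 : pN never maps an orbit point to an orbit point
  have F5 : ∀ a b : ℕ, pr N (σ^[a] x) ≠ σ^[b] x := by
    intro a b hab
    have claim : ∀ t : ℕ, pr N (σ^[a + t] x) = σ^[b + t * k'] x := by
      intro t
      induction t with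
      | zero => simpa using hab
      | succ t ih =>
        have key : pr M (σ^[b + t * k'] x) = pr N (σ^[b + t * k' + k'] x) := by
          have h1 : σ^[b + t * k' + k' + 1] x = σ^[b + t * k'] x := by
            have h2 : b + t * k' + k' + 1 = (b + t * k') + 1 * (k' + 1) := by ring
            rw [h2, hperiodic]
          have h2 : σ (σ^[b + t * k' + k'] x) = σ^[b + t * k'] x := by
            rw [← Function.iterate_succ_apply' σ (b + t * k' + k') x]
            exact h1
          have h3 := congrArg (pr M) h2.symm
          rw [hσ] at h3
          simp only at h3
          rwa [hMinv] at h3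
        have h3 : σ^[a + t + 1] x = pr N (σ^[b + t * k' + k'] x) := by
          rw [Function.iterate_succ_apply']
          show σ (σ^[a + t] x) = _
          rw [hσ]
          show pr M (pr N (σ^[a + t] x)) = _
          rw [ih, key]
        have h4 := congrArg (pr N) h3
        rw [hNinv] at h4
        rw [show a + (t + 1) = a + t + 1 by omega, h4]
        congr 1
        ring
    rcases Nat.even_or_odd (b + a * k') with ⟨t, h2t⟩ | ⟨t, h2t⟩
    · -- even case : σ^[a+t] x = σ^[b + t*k'] x, contradict master1
      refine master1 (a + t) (b + t * k') (claim t) ?_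
      apply cancel t
      have e1 : t + (a + t) = b + a * (k' + 1) := by
        have : a * (k' + 1) = a * k' + a := by ring
        omega
      have e2 : t + (b + t * k') = b + t * (k' + 1) := by ring
      rw [e1, e2, show b + a * (k' + 1) = b + a * (k' + 1) from rfl]
      rw [hperiodic a b, hperiodic t b]
    · -- odd case : σ^[a+t'] x = σ^[b + t'*k' + 1] x with t' = t+1, contradict master2
      refine master2 (a + (t + 1)) (b + (t + 1) * k') (claim (t + 1)) ?_
      apply cancel (t + 1)
      have e1 : (t + 1) + (a + (t + 1)) = (b + 1) + a * (k' + 1) := by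
        have : a * (k' + 1) = a * k' + a := by ring
        omega
      have e2 : (t + 1) + (b + (t + 1) * k' + 1) = (b + 1) + (t + 1) * (k' + 1) := by ring
      rw [e1, e2, hperiodic a (b + 1), hperiodic (t + 1) (b + 1)]
  -- the alternating vertex sequence
  set w : ℕ → V := fun i => if i % 2 = 0 then σ^[i / 2] x else pr N (σ^[i / 2] x) with hwdef
  have hwe : ∀ i, i % 2 = 0 → w i = σ^[i / 2] x := by
    intro i hi; rw [hwdef]; simp [hi]
  have hwo : ∀ i, i % 2 = 1 → w i = pr N (σ^[i / 2] x) := by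
    intro i hi; rw [hwdef]; simp [hi]
  have hadj : ∀ i, G.Adj (w i) (w (i + 1)) := by
    intro i
    rcases Nat.mod_two_eq_zero_or_one i with hi | hi
    · rw [hwe i hi, hwo (i + 1) (by omega), show (i + 1) / 2 = i / 2 by omega]
      exact pr_adj hN (hitN _)
    · rw [hwo i hi, hwe (i + 1) (by omega), show (i + 1) / 2 = i / 2 + 1 by omega,
        Function.iterate_succ_apply']
      show G.Adj _ (σ (σ^[i / 2] x))
      rw [hσ]
      exact pr_adj hM (hpNS _)
  set n := 2 * (k' + 1) with hn
  have hw0 : w 0 = x := by rw [hwe 0 rfl]; rfl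
  have hwn : w n = x := by rw [hwe n (by omega), show n / 2 = k' + 1 by omega, hk]
  refine ⟨x, (walkOfSeq G w hadj n).copy hw0 hwn, ?_⟩
  have hedges : ((walkOfSeq G w hadj n).copy hw0 hwn).edges
      = (List.range n).map (fun i => s(w i, w (i + 1))) := by
    rw [Walk.edges_copy]; exact walkOfSeq_edges G w hadj n
  have hsupp : ((walkOfSeq G w hadj n).copy hw0 hwn).support
      = (List.range (n + 1)).map w := by
    rw [Walk.support_copy]; exact walkOfSeq_support G w hadj n
  -- membership pattern of the edges
  have hEM : ∀ i, (s(w i, w (i + 1)) ∈ M ↔ i % 2 = 1) := by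
    intro i
    rcases Nat.mod_two_eq_zero_or_one i with hi | hi
    · rw [hwe i hi, hwo (i + 1) (by omega), show (i + 1) / 2 = i / 2 by omega]
      simp only [hi]
      exact iff_of_false (F4 _) (by omega)
    · rw [hwo i hi, hwe (i + 1) (by omega), show (i + 1) / 2 = i / 2 + 1 by omega,
        Function.iterate_succ_apply']
      have : σ (σ^[i / 2] x) = pr M (pr N (σ^[i / 2] x)) := by rw [hσ]
      rw [this]
      exact iff_of_true (pr_spec (hpNS _)) hi
  -- injectivity of w on [1, n]
  have winj : ∀ a b, 1 ≤ a → a ≤ n → 1 ≤ b → b ≤ n → w a = w b → a = b := by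
    intro a b ha1 han hb1 hbn hab
    rcases Nat.mod_two_eq_zero_or_one a with hae | hao <;>
      rcases Nat.mod_two_eq_zero_or_one b with hbe | hbo
    · -- both even
      rw [hwe a hae, hwe b hbe] at hab
      have hak : a / 2 ≤ k' + 1 := by omega
      have hbk : b / 2 ≤ k' + 1 := by omega
      have ha2 : 1 ≤ a / 2 := by omega
      have hb2 : 1 ≤ b / 2 := by omega
      rcases eq_or_lt_of_le hak with haeq | halt <;>
        rcases eq_or_lt_of_le hbk with hbeq | hblt
      · omega
      · rw [haeq, hk] at hab
        have : σ^[0] x = σ^[b / 2] x := by simpa using hab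
        have := inj1 _ _ (by omega) (by omega) this
        omega
      · rw [hbeq, hk] at hab
        have : σ^[a / 2] x = σ^[0] x := by simpa using hab
        have := inj1 _ _ (by omega) (by omega) this
        omega
      · have := inj1 _ _ halt hblt hab
        omega
    · -- a even, b odd
      rw [hwe a hae, hwo b hbo] at hab
      exact absurd hab.symm (F5 _ _)
    · rw [hwo a hao, hwe b hbe] at hab
      exact absurd hab (F5 _ _)
    · -- both odd
      rw [hwo a hao, hwo b hbo] at hab
      have hab' := hNinv.injective hab
      have := inj1 (a / 2) (b / 2) (by omega) (by omega) hab'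
      omega
  constructor
  · -- IsCycle
    rw [Walk.isCycle_def]
    refine ⟨?_, ?_, ?_⟩
    · rw [Walk.isTrail_def, hedges]
      refine List.Nodup.map_on ?_ List.nodup_range
      intro i hi j hj hij
      rw [List.mem_range] at hi hj
      rcases Sym2.eq_iff.1 hij with ⟨h1, h2⟩ | ⟨h1, h2⟩
      · exact Nat.succ_injective (winj _ _ (by omega) (by omega) (by omega) (by omega) h2)
      · -- crossed case
        rcases Nat.eq_zero_or_pos i with rfl | hi1 <;> rcases Nat.eq_zero_or_pos j with rfl | hj1
        · rfl
        · -- i = 0 : w 0 = w (j+1), w 1 = w j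
          rw [hw0, ← hwn] at h1
          have hj' : n = j + 1 := winj _ _ (by omega) (by omega) (by omega) (by omega) h1
          have h1j : (1 : ℕ) = j := winj _ _ (by omega) (by omega) (by omega) (by omega) h2
          omega
        · rw [hw0, ← hwn] at h2
          have hi' : i + 1 = n := winj _ _ (by omega) (by omega) (by omega) (by omega) h2
          have h1i : i = 1 := winj _ _ (by omega) (by omega) (by omega) (by omega) h1
          omega
        · have e1 : i = j + 1 := winj _ _ (by omega) (by omega) (by omega) (by omega) h1
          have e2 : i + 1 = j := winj _ _ (by omega) (by omega) (by omega) (by omega) h2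
          omega
    · -- not nil
      intro hcnil
      have : ((walkOfSeq G w hadj n).copy hw0 hwn).edges = [] := by rw [hcnil]; rfl
      rw [hedges] at this
      have := congrArg List.length this
      simp at this
    · -- support tail nodup
      rw [hsupp, List.range_succ_eq_map, List.map_cons, List.tail_cons, List.map_map]
      refine List.Nodup.map_on ?_ List.nodup_range
      intro i hi j hj hij
      rw [List.mem_range] at hi hj
      exact Nat.succ_injective
        (winj _ _ (by omega) (by omega) (by omega) (by omega) hij)
  constructor
  · rw [hedges]
    simp only [List.length_map, List.length_range]
    omega
  · -- Alternates
    rw [Alternates, hedges]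
    change List.IsChain _ _
    rw [List.isChain_map, show n = (n - 1) + 1 by omega,
      List.isChain_range_succ]
    intro m hm
    simp only [hEM m, hEM (m + 1)]
    omega

lemma alt_step {α : Type*} {p : α → Prop} {l : List α} (d : α)
    (h : l.Chain' fun a b => p a ↔ ¬ p b) (i : ℕ) (hi : i + 1 < l.length) :
    p (l.getD i d) ↔ ¬ p (l.getD (i + 1) d) := by
  have h2 := List.isChain_iff_getElem.1 h i (by omega)
  rw [List.getD_eq_getElem l d (by omega : i < l.length),
    List.getD_eq_getElem l d hi]
  simpa [List.get_eq_getElem] using h2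

lemma alt_parity {α : Type*} {p : α → Prop} {l : List α} (d : α)
    (h : l.Chain' fun a b => p a ↔ ¬ p b) (i : ℕ) (hi : i < l.length) :
    p (l.getD i d) ↔ (p (l.getD 0 d) ↔ i % 2 = 0) := by
  induction i with
  | zero => tauto
  | succ i ih =>
    have h1 := alt_step d h i (by omega)
    have h2 := ih (by omega)
    have e1 : (i % 2 = 0) ↔ ¬((i + 1) % 2 = 0) := by omega
    tauto

lemma not_UR_of_alt_cycle {G : SimpleGraph V} {M : Set (Sym2 V)} (hM : IsMatchingIn G M)
    {v : V} {c : G.Walk v v} (hc : IsAltCycle G M c) :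
    ∃ N : Set (Sym2 V), IsMatchingIn G N ∧ (∀ e ∈ N, ∀ x ∈ e, x ∈ sat M) ∧
      sat N = sat M ∧ N ≠ M := by
  classical
  obtain ⟨hcyc, heven, halt⟩ := hc
  set n := c.darts.length with hn
  have hlen : c.edges.length = n := by simp [Walk.edges, hn]
  have hn3 : 3 ≤ n := by
    have := hcyc.three_le_length
    rwa [hn, Walk.length_darts]
  have heven' : n % 2 = 0 := by rwa [hlen] at heven
  have hDne : c.darts ≠ [] := by
    intro h
    rw [h] at hn
    simp at hn
    omega
  -- proof-free accessors
  set fstV : ℕ → V := fun i => (c.darts.map (fun d => d.fst)).getD i v with hfstV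
  set sndV : ℕ → V := fun i => (c.darts.map (fun d => d.snd)).getD i v with hsndV
  set E : ℕ → Sym2 V := fun i => c.edges.getD i s(v, v) with hE
  have hfstV' : ∀ i (hi : i < n), fstV i = (c.darts[i]'hi).fst := by
    intro i hi
    rw [hfstV]
    simp only
    rw [List.getD_eq_getElem _ v (by rw [List.length_map]; omega)]
    simp
  have hsndV' : ∀ i (hi : i < n), sndV i = (c.darts[i]'hi).snd := by
    intro i hi
    rw [hsndV]
    simp only
    rw [List.getD_eq_getElem _ v (by rw [List.length_map]; omega)]
    simp
  have hE' : ∀ i (hi : i < n), E i = (c.darts[i]'hi).edge := by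
    intro i hi
    rw [hE]
    simp only
    rw [List.getD_eq_getElem _ _ (by omega : i < c.edges.length)]
    simp [Walk.edges]
  have hEfs : ∀ i (hi : i < n), E i = s(fstV i, sndV i) := by
    intro i hi
    rw [hE' i hi, hfstV' i hi, hsndV' i hi]
    rfl
  have hEC : ∀ i (hi : i < n), E i ∈ c.edges := by
    intro i hi
    rw [hE]
    simp only
    rw [List.getD_eq_getElem _ _ (by omega : i < c.edges.length)]
    exact List.getElem_mem _
  have hCE : ∀ e ∈ c.edges, ∃ i, i < n ∧ e = E i := by
    intro e he
    obtain ⟨i, hilt, hie⟩ := List.mem_iff_getElem.1 he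
    refine ⟨i, by omega, ?_⟩
    rw [hE]
    simp only
    rw [List.getD_eq_getElem _ _ hilt]
    exact hie.symm
  -- snd is injective
  have htail : c.darts.map (fun d => d.snd) = c.support.tail := c.map_snd_darts
  have sndinj : ∀ i j, i < n → j < n → sndV i = sndV j → i = j := by
    have htnd : (c.darts.map (fun d => d.snd)).Nodup := by
      rw [htail]; exact hcyc.support_nodup
    intro i j hi hj h
    rw [hsndV' i hi, hsndV' j hj] at h
    have h1 : (c.darts.map (fun d => d.snd))[i]'(by rw [List.length_map]; omega)
        = (c.darts.map (fun d => d.snd))[j]'(by rw [List.length_map]; omega) := by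
      simpa using h
    exact (htnd.getElem_inj_iff).1 h1
  -- consecutive darts
  have hstep : ∀ i, i + 1 < n → sndV i = fstV (i + 1) := by
    intro i hi
    rw [hsndV' i (by omega), hfstV' (i+1) hi]
    have h2 := List.isChain_iff_getElem.1 (Walk.isChain_dartAdj_darts c) i (by omega)
    simpa [List.get_eq_getElem] using h2
  have hwrap : sndV (n - 1) = fstV 0 := by
    rw [hsndV' (n-1) (by omega), hfstV' 0 (by omega)]
    have h1 : (c.darts.getLast hDne).snd = v := by rw [Walk.getLast_darts_eq_lastDart]; rfl
    have h2 : (c.darts.head hDne).fst = v := by rw [Walk.head_darts_eq_firstDart]; rfl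
    rw [List.getLast_eq_getElem] at h1
    rw [List.head_eq_getElem_zero] at h2
    exact h1.trans h2.symm
  -- fst in terms of snd
  have hfst : ∀ i, i < n → 0 < i → fstV i = sndV (i - 1) := by
    intro i hi h0
    obtain ⟨i', rfl⟩ : ∃ i', i = i' + 1 := ⟨i - 1, by omega⟩
    simpa using (hstep i' (by omega)).symm
  have hmemedge : ∀ (x : V) i, i < n → x ∈ E i → x = fstV i ∨ x = sndV i := by
    intro x i hi hx
    rw [hEfs i hi] at hx
    exact Sym2.mem_iff.1 hx
  have hfstmem : ∀ i, i < n → fstV i ∈ E i := by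
    intro i hi
    rw [hEfs i hi]
    exact Sym2.mem_mk_left _ _
  have hsndmem : ∀ i, i < n → sndV i ∈ E i := by
    intro i hi
    rw [hEfs i hi]
    exact Sym2.mem_mk_right _ _
  -- incidence : two edges sharing a vertex are cyclically adjacent
  have incidence : ∀ (x : V) i j, i < n → j < n → x ∈ E i → x ∈ E j →
      i = j ∨ i = j + 1 ∨ j = i + 1 ∨ (i = 0 ∧ j = n - 1) ∨ (j = 0 ∧ i = n - 1) := by
    intro x i j hi hj hxi hxj
    rcases hmemedge x i hi hxi with h1 | h1 <;> rcases hmemedge x j hj hxj with h2 | h2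
    · rcases Nat.eq_zero_or_pos i with rfl | hi0 <;> rcases Nat.eq_zero_or_pos j with rfl | hj0
      · left; rfl
      · rw [← hwrap] at h1
        rw [hfst j hj hj0] at h2
        have := sndinj _ _ (by omega) (by omega) (h1.symm.trans h2).symm
        omega
      · rw [← hwrap] at h2
        rw [hfst i hi hi0] at h1
        have := sndinj _ _ (by omega) (by omega) (h1.symm.trans h2).symm
        omega
      · rw [hfst i hi hi0] at h1
        rw [hfst j hj hj0] at h2
        have := sndinj _ _ (by omega) (by omega) (h1.symm.trans h2).symm
        omega
    · rcases Nat.eq_zero_or_pos i with rfl | hi0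
      · rw [← hwrap] at h1
        have := sndinj _ _ (by omega) (by omega) (h1.symm.trans h2).symm
        omega
      · rw [hfst i hi hi0] at h1
        have := sndinj _ _ (by omega) (by omega) (h1.symm.trans h2).symm
        omega
    · rcases Nat.eq_zero_or_pos j with rfl | hj0
      · rw [← hwrap] at h2
        have := sndinj _ _ (by omega) (by omega) (h1.symm.trans h2).symm
        omega
      · rw [hfst j hj hj0] at h2
        have := sndinj _ _ (by omega) (by omega) (h1.symm.trans h2).symm
        omega
    · have := sndinj _ _ (by omega) (by omega) (h1.symm.trans h2)
      omega
  -- parity of membership in M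
  have halt' : c.edges.Chain' fun a b => (a ∈ M) ↔ ¬ (b ∈ M) := halt
  have hb : ∀ i, i < n → ((E i ∈ M) ↔ ((E 0 ∈ M) ↔ i % 2 = 0)) := by
    intro i hi
    exact alt_parity (p := fun e => e ∈ M) s(v,v) halt' i (by omega)
  have opp : ∀ i j, i < n → j < n → i ≠ j → (∃ x : V, x ∈ E i ∧ x ∈ E j) →
      ((E i ∈ M) ↔ (E j ∉ M)) := by
    rintro i j hi hj hne ⟨x, hxi, hxj⟩
    have hpar : i % 2 ≠ j % 2 := by
      rcases incidence x i j hi hj hxi hxj with h | h | h | ⟨h1, h2⟩ | ⟨h1, h2⟩ <;> omega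
    have b1 := hb i hi
    have b2 := hb j hj
    have e1 : (i % 2 = 0) ↔ ¬(j % 2 = 0) := by omega
    tauto
  -- existence of the two cyclically adjacent edges at a support vertex
  have hex : ∀ (x : V), x ∈ c.support → ∃ i j, i < n ∧ j < n ∧ i ≠ j ∧
      x ∈ E i ∧ x ∈ E j ∧ (E i ∈ M) ∧ (E j ∉ M) := by
    intro x hx
    have hm : ∃ m, m < n ∧ x = sndV m := by
      rw [Walk.support_eq_cons] at hx
      rcases List.mem_cons.1 hx with rfl | hx'
      · refine ⟨n - 1, by omega, ?_⟩
        rw [hsndV' (n-1) (by omega)]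
        have h1 : (c.darts.getLast hDne).snd = x := by rw [Walk.getLast_darts_eq_lastDart]; rfl
        rw [List.getLast_eq_getElem] at h1
        exact h1.symm
      · rw [← htail] at hx'
        obtain ⟨m, hmlt, hme⟩ := List.mem_iff_getElem.1 hx'
        rw [List.length_map] at hmlt
        refine ⟨m, by omega, ?_⟩
        rw [hsndV' m (by omega)]
        simpa using hme.symm
    obtain ⟨m, hmlt, hme⟩ := hm
    set m2 := if m = n - 1 then 0 else m + 1 with hm2
    have hm2lt : m2 < n := by rw [hm2]; split <;> omega
    have hm2ne : m ≠ m2 := by rw [hm2]; split <;> omega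
    have hxm : x ∈ E m := by rw [hme]; exact hsndmem m hmlt
    have hxm2 : x ∈ E m2 := by
      have hf : fstV m2 = sndV m := by
        rw [hm2]
        split
        · next h => subst h; exact hwrap.symm
        · next h => rw [hfst (m+1) (by omega) (by omega)]; simp
      have h2 : x = fstV m2 := by rw [hf, ← hme]
      rw [h2]; exact hfstmem m2 hm2lt
    have hopp := opp m m2 hmlt hm2lt hm2ne ⟨x, hxm, hxm2⟩
    by_cases hmm : (E m) ∈ M
    · exact ⟨m, m2, hmlt, hm2lt, hm2ne, hxm, hxm2, hmm, by tauto⟩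
    · exact ⟨m2, m, hm2lt, hmlt, (Ne.symm hm2ne), hxm2, hxm, by tauto, hmm⟩
  -- the cycle's edge set
  set C : Set (Sym2 V) := {e | e ∈ c.edges} with hC
  have hidxC : ∀ i, i < n → E i ∈ C := fun i hi => hEC i hi
  have hsupmem : ∀ (e : Sym2 V), e ∈ C → ∀ x ∈ e, x ∈ c.support := by
    intro e he x hx
    induction e using Sym2.ind with
    | _ a b =>
      rcases Sym2.mem_iff.1 hx with rfl | rfl
      · exact c.fst_mem_support_of_mem_edges he
      · exact c.snd_mem_support_of_mem_edges he
  have hsatsup : ∀ (x : V), x ∈ c.support → x ∈ sat M := by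
    intro x hx
    obtain ⟨i, j, hi, hj, _, hxi, _, hiM, _⟩ := hex x hx
    exact ⟨_, hiM, hxi⟩
  -- the new matching
  refine ⟨(M \ C) ∪ (C \ M), ⟨?_, ?_⟩, ?_, ?_, ?_⟩
  · rintro e (⟨he, -⟩ | ⟨he, -⟩)
    · exact hM.1 he
    · exact c.edges_subset_edgeSet he
  · rintro e (⟨heM, heC⟩ | ⟨heC, heM⟩) f (⟨hfM, hfC⟩ | ⟨hfC, hfM⟩) hef x ⟨hxe, hxf⟩
    · exact hM.2 e heM f hfM hef x ⟨hxe, hxf⟩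
    · have hxs : x ∈ c.support := hsupmem f hfC x hxf
      obtain ⟨i, j, hi, hj, hij, hxi, hxj, hiM, hjM⟩ := hex x hxs
      have hne2 : e ≠ E i := by
        intro h
        exact heC (h ▸ hidxC i hi)
      exact hM.2 e heM _ hiM hne2 x ⟨hxe, hxi⟩
    · have hxs : x ∈ c.support := hsupmem e heC x hxe
      obtain ⟨i, j, hi, hj, hij, hxi, hxj, hiM, hjM⟩ := hex x hxs
      have hne2 : f ≠ E i := by
        intro h
        exact hfC (h ▸ hidxC i hi)
      exact hM.2 f hfM _ hiM hne2 x ⟨hxf, hxi⟩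
    · obtain ⟨i, hi, rfl⟩ := hCE e heC
      obtain ⟨j, hj, rfl⟩ := hCE f hfC
      have hij : i ≠ j := fun h => hef (by rw [h])
      have := opp i j hi hj hij ⟨x, hxe, hxf⟩
      tauto
  · rintro e (⟨heM, -⟩ | ⟨heC, -⟩) x hx
    · exact ⟨e, heM, hx⟩
    · exact hsatsup x (hsupmem e heC x hx)
  · ext x
    constructor
    · rintro ⟨e, (⟨heM, -⟩ | ⟨heC, -⟩), hx⟩
      · exact ⟨e, heM, hx⟩
      · exact hsatsup x (hsupmem e heC x hx)
    · rintro ⟨e, heM, hx⟩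
      by_cases heC : e ∈ C
      · have hxs : x ∈ c.support := hsupmem e heC x hx
        obtain ⟨i, j, hi, hj, hij, hxi, hxj, hiM, hjM⟩ := hex x hxs
        exact ⟨_, Or.inr ⟨hidxC j hj, hjM⟩, hxj⟩
      · exact ⟨e, Or.inl ⟨heM, heC⟩, hx⟩
  · intro hNM
    have h01 : (E 0 ∈ M) ↔ (E 1 ∉ M) := by
      exact alt_step (p := fun e => e ∈ M) s(v,v) halt' 0 (by omega)
    have hne : ∃ i, i < n ∧ (E i ∉ M) := by
      by_cases h0 : (E 0) ∈ M
      · exact ⟨1, by omega, h01.1 h0⟩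
      · exact ⟨0, by omega, h0⟩
    obtain ⟨i, hi, hiM⟩ := hne
    have hmem : (E i) ∈ (M \ C) ∪ (C \ M) := Or.inr ⟨hidxC i hi, hiM⟩
    rw [hNM] at hmem
    exact hiM hmem

/-- `M` is uniquely restricted iff `G` contains no `M`-alternating cycle. -/
theorem stmt0 [Fintype V] (G : SimpleGraph V) (M : Set (Sym2 V))
    (hM : IsMatchingIn G M) :
    UniquelyRestricted G M ↔ ¬ ∃ (v : V) (c : G.Walk v v), IsAltCycle G M c := by
  
  constructor
  · rintro hUR ⟨v, c, hc⟩
    obtain ⟨N, hN, hsub, hsat, hne⟩ := not_UR_of_alt_cycle hM hc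
    exact hne (hUR.2 N hN hsub hsat)
  · intro hnc
    refine ⟨hM, fun N hN hsub hsat => ?_⟩
    by_contra hne
    exact hnc (exists_alt_cycle hM hN hsat hne)
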